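/- For infinite cardinals κ ≤ λ and any cardinal μ ≥ λ⁺, the cofinality of ⟨^λκ, ≤⟩ is at most the cofinality of ⟨^μκ, ≤*⟩. -/

import Mathlib

open Cardinal Order

/-- The cofinality of the everywhere (pointwise) domination order on functions `X → K`. -/
noncomputable def everyCof (X K : Type*) [LE K] : Cardinal :=
  sInf {c | ∃ D : Set (X → K), #D = c ∧ ∀ f : X → K, ∃ g ∈ D, ∀ x, f x ≤ g x}

/-- The cofinality of the eventual domination order on functions `X → K`. -/
noncomputable def evenCof (X K : Type*) [LE X] [LE K] : Cardinal :=
  sInf {c | ∃ D : Set (X → K), #D = c ∧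
    ∀ f : X → K, ∃ g ∈ D, ∃ a : X, ∀ b : X, a ≤ b → f b ≤ g b}

lemma myAux.exists_ge_of_inj {c : Cardinal} (ψ : c.ord.ToType → c.ord.ToType)
    (hψ : Function.Injective ψ) (a : c.ord.ToType) : ∃ b, a ≤ ψ b := by
  by_contra h
  push_neg at h
  have h2 : #(c.ord.ToType) ≤ #(Set.Iio a) :=
    Cardinal.mk_le_of_injective (f := fun b => (⟨ψ b, h b⟩ : Set.Iio a))
      (fun x y hxy => hψ (congrArg Subtype.val hxy))
  rw [Cardinal.mk_toType, Cardinal.card_ord] at h2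
  exact absurd (h2.trans_lt (Cardinal.mk_Iio_ord_toType a)) (lt_irrefl c)

theorem stmt_5 (k l m : Cardinal) (hk : ℵ₀ ≤ k) (hkl : k ≤ l) (hm : Order.succ l ≤ m) :
    everyCof l.ord.ToType k.ord.ToType ≤ evenCof m.ord.ToType k.ord.ToType := by
  have hl : ℵ₀ ≤ l := hk.trans hkl
  have hlm : l ≤ m := (le_succ l).trans hm
  have hm' : ℵ₀ ≤ m := hl.trans hlm
  haveI hKne : Nonempty k.ord.ToType := Ordinal.toType_nonempty_iff_ne_zero.2
    (by simp only [ne_eq, Cardinal.ord_eq_zero]; exact (aleph0_pos.trans_le (by assumption)).ne')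
  haveI hMne : Nonempty m.ord.ToType := Ordinal.toType_nonempty_iff_ne_zero.2
    (by simp only [ne_eq, Cardinal.ord_eq_zero]; exact (aleph0_pos.trans_le (by assumption)).ne')
  haveI : NoMaxOrder k.ord.ToType := Cardinal.noMaxOrder hk
  set M := m.ord.ToType
  set L := l.ord.ToType
  set K := k.ord.ToType
  have hSne : {c | ∃ D : Set (M → K), #D = c ∧
      ∀ f : M → K, ∃ g ∈ D, ∃ a : M, ∀ b : M, a ≤ b → f b ≤ g b}.Nonempty :=
    ⟨#(Set.univ : Set (M → K)), Set.univ, rfl,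
      fun f => ⟨f, Set.mem_univ f, Classical.arbitrary M, fun b _ => le_rfl⟩⟩
  obtain ⟨D, hDcard, hDdom⟩ := csInf_mem hSne
  obtain ⟨g₀, hg₀, -⟩ := hDdom (fun _ => Classical.arbitrary K)
  -- Step 1 : m ≤ #D
  have hmD : m ≤ #D := by
    by_contra hlt
    push_neg at hlt
    have heq : #M = #(M × ↥D) := by
      rw [Cardinal.mk_prod, Cardinal.lift_id, Cardinal.lift_id, Cardinal.mk_toType,
        Cardinal.card_ord, Cardinal.mul_eq_left hm' hlt.le
          (by simp only [ne_eq, Cardinal.mk_eq_zero_iff, not_isEmpty_iff]; exact ⟨⟨g₀, hg₀⟩⟩)]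
    obtain ⟨π⟩ := Cardinal.eq.1 heq
    have hf : ∀ b : M, ∃ y : K, ((π b).2 : M → K) b < y := fun b => exists_gt _
    choose f hfgt using hf
    obtain ⟨g, hg, a, hga⟩ := hDdom f
    obtain ⟨b, hb⟩ := myAux.exists_ge_of_inj (c := m) (fun b => π.symm (b, ⟨g, hg⟩))
      (fun x y hxy => congrArg Prod.fst (π.symm.injective hxy)) a
    have h1 := hga _ hb
    have h2 := hfgt (π.symm (b, ⟨g, hg⟩))
    rw [Equiv.apply_symm_apply] at h2
    exact absurd (h2.trans_le h1) (lt_irrefl _)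
  -- Step 2 : build a dominating family for pointwise order on L → K
  have heq2 : #M = #(M × L) := by
    rw [Cardinal.mk_prod, Cardinal.lift_id, Cardinal.lift_id, Cardinal.mk_toType,
      Cardinal.card_ord, Cardinal.mk_toType, Cardinal.card_ord,
      Cardinal.mul_eq_left hm' hlm ((aleph0_pos.trans_le hl).ne')]
  obtain ⟨ρ⟩ := Cardinal.eq.1 heq2
  have hsec : ∀ (s : M) (x : L), ∃ b : M, s ≤ ρ.symm (b, x) :=
    fun s x => myAux.exists_ge_of_inj (c := m) (fun b => ρ.symm (b, x))
      (fun u v huv => congrArg Prod.fst (ρ.symm.injective huv)) s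
  choose sec hsecge using hsec
  set D' : Set (L → K) :=
    Set.range (fun p : ↥D × M => fun x : L => (p.1 : M → K) (ρ.symm (sec p.2 x, x))) with hD'
  have hdom' : ∀ f : L → K, ∃ g ∈ D', ∀ x, f x ≤ g x := by
    intro f
    obtain ⟨g, hg, a, hga⟩ := hDdom (fun b => f (ρ b).2)
    refine ⟨fun x => g (ρ.symm (sec a x, x)), ⟨(⟨g, hg⟩, a), rfl⟩, fun x => ?_⟩
    have := hga _ (hsecge a x)
    rwa [Equiv.apply_symm_apply] at this
  have hcard' : #D' ≤ #D := by
    calc #D' ≤ #(↥D × M) := Cardinal.mk_range_le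
    _ = #D * m := by
        rw [Cardinal.mk_prod, Cardinal.lift_id, Cardinal.lift_id, Cardinal.mk_toType,
          Cardinal.card_ord]
    _ = #D := Cardinal.mul_eq_left (hm'.trans hmD) hmD ((aleph0_pos.trans_le hm').ne')
  calc everyCof L K ≤ #D' := csInf_le' ⟨D', rfl, hdom'⟩
  _ ≤ #D := hcard'
  _ = evenCof M K := hDcard
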